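/- Let K ⊂ ℂ be a compact set, z ∈ ∂K a point such that there exists a closed disk D_R of radius R passing through z and containing K. Then for any polynomial p of degree n with all zeros in K, |p'(z)| ≥ (n/(2R))·|p(z)|. -/

import Mathlib

open Polynomial

lemma aux_sum (z : ℂ) (S : Multiset ℂ) (h : ∀ w ∈ S, z ≠ w) :
    Polynomial.eval z (Polynomial.derivative (S.map (fun a => X - C a)).prod) =
    Polynomial.eval z (S.map (fun a => X - C a)).prod * (S.map (fun a => (z - a)⁻¹)).sum := by
  induction S using Multiset.induction with
  | empty => simp
  | cons w T ih =>
    have hzw : z - w ≠ 0 := sub_ne_zero.2 (h w (Multiset.mem_cons_self w T))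
    have ih' := ih (fun u hu => h u (Multiset.mem_cons_of_mem hu))
    simp only [Multiset.map_cons, Multiset.prod_cons, Multiset.sum_cons, derivative_mul,
      derivative_X_sub_C, eval_add, eval_mul, eval_one, eval_sub, eval_X, eval_C, one_mul, ih']
    field_simp

lemma aux_re (R : ℝ) (hR : 0 < R) (z c w : ℂ) (hzc : dist z c = R)
    (hw : w ∈ Metric.closedBall c R) (hzw : z ≠ w) :
    (1:ℝ)/2 ≤ ((z - c) * (z - w)⁻¹).re := by
  have h1 : ‖z - c‖ = R := by rwa [Complex.dist_eq] at hzc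
  have h2 : ‖w - c‖ ≤ R := by
    rw [Metric.mem_closedBall, Complex.dist_eq] at hw; exact hw
  have hzw' : z - w ≠ 0 := sub_ne_zero.2 hzw
  have habs : (0:ℝ) < ‖z - w‖ := norm_pos_iff.mpr hzw'
  have key : ‖z - w‖ ^ 2 / 2 ≤ ((z - c) * (starRingEnd ℂ) (z - w)).re := by
    have e1 : ‖z - w‖^2 = ‖z-c‖^2 + 2*((z-c)*(starRingEnd ℂ) (c-w)).re + ‖c-w‖^2 := by
      have : z - w = (z - c) + (c - w) := by ring
      rw [this]
      simp only [← Complex.normSq_eq_norm_sq, Complex.normSq_apply, Complex.add_re, Complex.add_im,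
        Complex.mul_re, Complex.conj_re, Complex.conj_im]
      ring
    have e2 : ((z - c) * (starRingEnd ℂ) (z - w)).re = ‖z-c‖^2 + ((z-c)*(starRingEnd ℂ) (c-w)).re := by
      have : z - w = (z - c) + (c - w) := by ring
      rw [this, map_add, mul_add, Complex.add_re, ← Complex.normSq_eq_norm_sq, Complex.mul_conj]
      simp
    have h3 : ‖c-w‖ ≤ R := by rwa [← norm_neg, neg_sub]
    have h1' : ‖z-c‖^2 = R^2 := by rw [h1]
    have h3' : ‖c-w‖^2 ≤ R^2 := by nlinarith [norm_nonneg (c-w)]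
    linarith
  have inv_eq : (z - w)⁻¹ = (starRingEnd ℂ) (z - w) / ((‖z-w‖^2 : ℝ) : ℂ) := by
    rw [Complex.inv_def]
    congr 1
    rw [Complex.normSq_eq_norm_sq]
    push_cast
    ring
  rw [inv_eq, mul_div_assoc', Complex.div_ofReal_re, le_div_iff₀ (by positivity)]
  nlinarith [key]


/-- Turán's pointwise inequality: if `z ∈ K` lies on the boundary circle of a closed
disk of radius `R` containing `K`, then for any polynomial `p` of degree `n` with all
zeros (with multiplicity) in `K`, `|p'(z)| ≥ (n/(2R)) |p(z)|`. -/
theorem stmt_18 (K : Set ℂ) (hK : IsCompact K) (R : ℝ) (hR : 0 < R)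
    (z : ℂ) (hz : z ∈ K) (c : ℂ) (hzc : dist z c = R) (hKD : K ⊆ Metric.closedBall c R)
    (p : Polynomial ℂ) (n : ℕ) (hn : p.natDegree = n) (hp0 : p ≠ 0)
    (hroots : ∀ w ∈ p.roots, w ∈ K) :
    (n : ℝ) / (2 * R) * ‖p.eval z‖ ≤
      ‖(Polynomial.derivative p).eval z‖ := by
  by_cases heval : p.eval z = 0
  · simp only [heval, norm_zero, mul_zero]
    positivity
  set S := p.roots with hS
  have hcard : Multiset.card S = p.natDegree :=
    (Polynomial.splits_iff_card_roots).1 (IsAlgClosed.splits p)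
  have hzS : ∀ w ∈ S, z ≠ w := by
    intro w hw hzw
    exact heval (hzw ▸ (Polynomial.mem_roots hp0).1 hw)
  have hrep := (Polynomial.C_leadingCoeff_mul_prod_multiset_X_sub_C hcard)
  have hderiv : (Polynomial.derivative p).eval z =
      p.eval z * (S.map (fun a => (z - a)⁻¹)).sum := by
    conv_lhs => rw [← hrep]
    conv_rhs => rw [← hrep]
    rw [derivative_mul, derivative_C, zero_mul, zero_add, eval_mul, eval_mul, eval_C,
      aux_sum z S hzS, mul_assoc]
  set Sg := (S.map (fun a => (z - a)⁻¹)).sum with hSg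
  have hre : (n : ℝ) / 2 ≤ ((z - c) * Sg).re := by
    have h1 : (z - c) * Sg = (S.map (fun a => (z - c) * (z - a)⁻¹)).sum := by
      rw [hSg, Multiset.sum_map_mul_left]
    rw [h1]
    have hmre := map_multiset_sum Complex.reAddGroupHom (S.map (fun a => (z - c) * (z - a)⁻¹))
    rw [Multiset.map_map] at hmre
    rw [show ((S.map (fun a => (z - c) * (z - a)⁻¹)).sum).re
        = Complex.reAddGroupHom (S.map (fun a => (z - c) * (z - a)⁻¹)).sum from rfl, hmre]
    have h2 := Multiset.card_nsmul_le_sum (s := S.map (Complex.reAddGroupHom ∘ fun a => (z - c) * (z - a)⁻¹)) (a := (1:ℝ)/2) ?_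
    · rw [Multiset.card_map, hcard, hn] at h2
      calc (n:ℝ)/2 = n • ((1:ℝ)/2) := by rw [nsmul_eq_mul]; ring
        _ ≤ _ := h2
    · intro x hx
      obtain ⟨a, ha, rfl⟩ := Multiset.mem_map.1 hx
      exact aux_re R hR z c a hzc (hKD (hroots a ha)) (hzS a ha)
  have habs : (n : ℝ) / 2 ≤ R * ‖Sg‖ := by
    calc (n:ℝ)/2 ≤ ((z - c) * Sg).re := hre
      _ ≤ ‖(z - c) * Sg‖ := Complex.re_le_norm _
      _ = R * ‖Sg‖ := by
          rw [norm_mul, show ‖z-c‖ = R by rwa [Complex.dist_eq] at hzc]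
  rw [hderiv, norm_mul, mul_comm]
  apply mul_le_mul_of_nonneg_left _ (norm_nonneg _)
  rw [div_le_iff₀ (by positivity)]
  nlinarith [habs]
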